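/- arXiv:2306.17697 — 2 statements merged into one kernel-verified Lean document; each statement's English description precedes it below -/
import Mathlib

section
/- Joint high-SNR and high-OSR limit: fix γ ∈ [0,1) and assume the interference power Σ_{j≠u} |gᴴh_j|² > 0. Then as (β, ρ) tends to (∞, ∞) (i.e., along the product filter atTop × atTop), ζ(γ, β, ρ) tends to the interference-limited upper bound |gᴴh_u|² / Σ_{j≠u} |gᴴh_j|², which is exactly the high-SNR limit of the unquantized SINDR: the low-resolution system achieves the same limiting performance as the unquantized one when both the SNR and the OSR are sufficiently high. -/
open Finset Filter Topology

/-- Inner product `gᴴ x = Σ_m conj(g_m) x_m`. -/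
noncomputable def gH {M : ℕ} (g x : Fin M → ℂ) : ℂ :=
  ∑ m, (starRingEnd ℂ) (g m) * x m

/-- Quadratic form `gᴴ H_e g = Σ_m (H_e)_{mm} |g_m|²` for a diagonal `H_e`. -/
noncomputable def quadHe {M : ℕ} (He : Fin M → ℝ) (g : Fin M → ℂ) : ℝ :=
  ∑ m, He m * ‖g m‖ ^ 2

/-- Squared Euclidean norm `‖g‖² = Σ_m |g_m|²`. -/
noncomputable def normSq' {M : ℕ} (g : Fin M → ℂ) : ℝ :=
  ∑ m, ‖g m‖ ^ 2

/-- Interference power `Σ_{j ≠ u} |gᴴ h_j|²`. -/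
noncomputable def interf {M U : ℕ} (u : Fin U) (g : Fin M → ℂ)
    (h : Fin U → Fin M → ℂ) : ℝ :=
  ∑ j ∈ Finset.univ.erase u, ‖gH g (h j)‖ ^ 2

/-- SINDR of user `u`:
`ζ(γ,β,ρ) = |gᴴh_u|² / ( Σ_{j≠u}|gᴴh_j|² + (γ/((1−γ)β)) gᴴH_e g + (1/(ρ(1−γ)))‖g‖² )`. -/
noncomputable def zeta {M U : ℕ} (u : Fin U) (g : Fin M → ℂ)
    (h : Fin U → Fin M → ℂ) (He : Fin M → ℝ) (γ β ρ : ℝ) : ℝ :=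
  ‖gH g (h u)‖ ^ 2 /
    (interf u g h + (γ / ((1 - γ) * β)) * quadHe He g
      + (1 / (ρ * (1 - γ))) * normSq' g)

/-- Joint high-SNR and high-OSR limit: ζ(γ,β,ρ) tends to the interference-limited bound
as (β,ρ) → (∞,∞) along the product filter. -/
theorem sindr_tendsto_joint_infinity (M U : ℕ) (u : Fin U) (g : Fin M → ℂ)
    (h : Fin U → Fin M → ℂ) (He : Fin M → ℝ) (hHe : ∀ m, 0 ≤ He m)
    (γ : ℝ) (hγ : γ ∈ Set.Ico (0 : ℝ) 1) (hI : 0 < interf u g h) :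
    Tendsto (fun q : ℝ × ℝ => zeta u g h He γ q.1 q.2) (atTop ×ˢ atTop)
      (𝓝 (‖gH g (h u)‖ ^ 2 / interf u g h)) := by
  obtain ⟨hγ0, hγ1⟩ := hγ
  have h1γ : (0:ℝ) < 1 - γ := by linarith
  have hb : Tendsto (fun b : ℝ => (γ / ((1 - γ) * b)) * quadHe He g) atTop (𝓝 0) := by
    have h1 : Tendsto (fun b : ℝ => (1 - γ) * b) atTop atTop :=
      tendsto_id.const_mul_atTop h1γ
    have h2 : Tendsto (fun b : ℝ => γ / ((1 - γ) * b)) atTop (𝓝 0) :=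
      Tendsto.div_atTop tendsto_const_nhds h1
    simpa using h2.mul_const (quadHe He g)
  have hr : Tendsto (fun r : ℝ => (1 / (r * (1 - γ))) * normSq' g) atTop (𝓝 0) := by
    have h1 : Tendsto (fun r : ℝ => r * (1 - γ)) atTop atTop :=
      tendsto_id.atTop_mul_const h1γ
    have h2 : Tendsto (fun r : ℝ => 1 / (r * (1 - γ))) atTop (𝓝 0) :=
      Tendsto.div_atTop tendsto_const_nhds h1
    simpa using h2.mul_const (normSq' g)
  have hden : Tendsto (fun q : ℝ × ℝ => interf u g h + (γ / ((1 - γ) * q.1)) * quadHe He g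
      + (1 / (q.2 * (1 - γ))) * normSq' g) (atTop ×ˢ atTop) (𝓝 (interf u g h)) := by
    have hc : Tendsto (fun _ : ℝ × ℝ => interf u g h) (atTop ×ˢ atTop) (𝓝 (interf u g h)) :=
      tendsto_const_nhds
    have := (hc.add (hb.comp tendsto_fst)).add (hr.comp tendsto_snd)
    simpa using this
  have hc2 : Tendsto (fun _ : ℝ × ℝ => ‖gH g (h u)‖ ^ 2) (atTop ×ˢ atTop)
      (𝓝 (‖gH g (h u)‖ ^ 2)) := tendsto_const_nhds
  have := Tendsto.div hc2 hden hI.ne'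
  simpa [zeta, Pi.div_def] using this
end

section
/- Joint high-SNR and high-OSR limit of the achievable sum rate: fix γ ∈ [0,1) and Δf > 0, and assume Σ_{j≠u} |g_{u,k}ᴴh_{j,k}|² > 0 for all (u,k). Then as (β, ρ) tends to (∞, ∞) (along the product filter atTop × atTop), the sum rate R(γ, β, ρ) tends to Σ_{k=1}^{K} Σ_{u=1}^{U} Δf · log₂( 1 + |g_{u,k}ᴴh_{u,k}|² / Σ_{j≠u} |g_{u,k}ᴴh_{j,k}|² ), the interference-limited sum rate of the unquantized system. -/
open Finset Filter Topology

/-- Achievable sum rate `R(γ,β,ρ) = Σ_k Σ_u Δf · log₂(1 + ζ_{u,k}(γ,β,ρ))`. -/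
noncomputable def sumRate {M U K : ℕ} (g : Fin K → Fin U → Fin M → ℂ)
    (h : Fin K → Fin U → Fin M → ℂ) (He : Fin M → ℝ) (Δf : ℝ)
    (γ β ρ : ℝ) : ℝ :=
  ∑ k : Fin K, ∑ u : Fin U, Δf * Real.logb 2 (1 + zeta u (g k u) (h k) He γ β ρ)

/-- Joint high-SNR and high-OSR limit of the achievable sum rate: as (β,ρ) → (∞,∞),
R(γ,β,ρ) tends to the interference-limited sum rate of the unquantized system. -/
theorem sumRate_tendsto_joint_infinity (M U K : ℕ) (g : Fin K → Fin U → Fin M → ℂ)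
    (h : Fin K → Fin U → Fin M → ℂ) (He : Fin M → ℝ) (hHe : ∀ m, 0 ≤ He m)
    (Δf : ℝ) (hΔf : 0 < Δf) (γ : ℝ) (hγ : γ ∈ Set.Ico (0 : ℝ) 1)
    (hI : ∀ (k : Fin K) (u : Fin U), 0 < interf u (g k u) (h k)) :
    Tendsto (fun q : ℝ × ℝ => sumRate g h He Δf γ q.1 q.2) (atTop ×ˢ atTop)
      (𝓝 (∑ k : Fin K, ∑ u : Fin U, Δf *
        Real.logb 2 (1 + ‖gH (g k u) (h k u)‖ ^ 2 / interf u (g k u) (h k)))) := by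
  have h1γ : (0:ℝ) < 1 - γ := by linarith [hγ.2]
  unfold sumRate
  apply tendsto_finset_sum
  intro k _
  apply tendsto_finset_sum
  intro u _
  set A := ‖gH (g k u) (h k u)‖ ^ 2 with hA
  set I := interf u (g k u) (h k) with hIdef
  have hIpos := hI k u
  -- the two vanishing terms
  have hβ : Tendsto (fun q : ℝ × ℝ => (γ / ((1 - γ) * q.1)) * quadHe He (g k u))
      (atTop ×ˢ atTop) (𝓝 0) := by
    have h2 : Tendsto (fun q : ℝ × ℝ => (1 - γ) * q.1) (atTop ×ˢ atTop) atTop :=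
      (tendsto_fst.const_mul_atTop h1γ)
    have h3 : Tendsto (fun q : ℝ × ℝ => ((1 - γ) * q.1)⁻¹) (atTop ×ˢ atTop) (𝓝 0) :=
      h2.inv_tendsto_atTop
    have := (h3.const_mul γ).mul_const (quadHe He (g k u))
    simpa [div_eq_mul_inv, mul_assoc] using this
  have hρ : Tendsto (fun q : ℝ × ℝ => (1 / (q.2 * (1 - γ))) * normSq' (g k u))
      (atTop ×ˢ atTop) (𝓝 0) := by
    have h2 : Tendsto (fun q : ℝ × ℝ => q.2 * (1 - γ)) (atTop ×ˢ atTop) atTop :=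
      (tendsto_snd.atTop_mul_const h1γ)
    have h3 : Tendsto (fun q : ℝ × ℝ => (q.2 * (1 - γ))⁻¹) (atTop ×ˢ atTop) (𝓝 0) :=
      h2.inv_tendsto_atTop
    have := h3.mul_const (normSq' (g k u))
    simpa [one_div] using this
  have hD : Tendsto (fun q : ℝ × ℝ =>
      I + (γ / ((1 - γ) * q.1)) * quadHe He (g k u)
        + (1 / (q.2 * (1 - γ))) * normSq' (g k u)) (atTop ×ˢ atTop) (𝓝 I) := by
    have := ((tendsto_const_nhds (x := I) (f := atTop ×ˢ atTop)).add hβ).add hρ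
    simpa using this
  have hζ : Tendsto (fun q : ℝ × ℝ => zeta u (g k u) (h k) He γ q.1 q.2)
      (atTop ×ˢ atTop) (𝓝 (A / I)) := by
    unfold zeta
    exact tendsto_const_nhds.div hD (ne_of_gt hIpos)
  have hpos : (0:ℝ) < 1 + A / I := by positivity
  have hlog : Tendsto (fun q : ℝ × ℝ => Real.logb 2 (1 + zeta u (g k u) (h k) He γ q.1 q.2))
      (atTop ×ˢ atTop) (𝓝 (Real.logb 2 (1 + A / I))) := by
    have hc : ContinuousAt (Real.logb 2) (1 + A / I) :=
      Real.continuousAt_logb (ne_of_gt hpos)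
    exact hc.tendsto.comp (tendsto_const_nhds.add hζ)
  exact hlog.const_mul Δf
end
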